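/- In the ring of 3×3 real matrices, let x_1(a) = I + a·E_{12} and x_2(a) = I + a·E_{23} for a ∈ ℝ. Then for all a, b ∈ ℝ with a > 0 and b > 0, the pair (a', b') = (b, a) is the unique pair of positive reals satisfying x_1(a)·x_2(b)·x_2(b)·x_1(a) = x_2(a')·x_1(b')·x_1(b')·x_2(a'). -/

import Mathlib

/-- The Chevalley generator `x₁(a) = I + a·E₁₂` of the upper unitriangular subgroup of `SL₃(ℝ)`. -/
def x1 (a : ℝ) : Matrix (Fin 3) (Fin 3) ℝ := !![1, a, 0; 0, 1, 0; 0, 0, 1]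

/-- The Chevalley generator `x₂(a) = I + a·E₂₃` of the upper unitriangular subgroup of `SL₃(ℝ)`. -/
def x2 (a : ℝ) : Matrix (Fin 3) (Fin 3) ℝ := !![1, 0, 0; 0, 1, a; 0, 0, 1]

lemma prod_eq (a b : ℝ) :
    x1 a * x2 b * x2 b * x1 a = !![1, 2*a, 2*a*b; 0, 1, 2*b; 0, 0, 1] := by
  simp [x1, x2, Matrix.mul_fin_three]
  ring_nf
  simp

lemma prod_eq' (a b : ℝ) :
    x2 a * x1 b * x1 b * x2 a = !![1, 2*b, 2*a*b; 0, 1, 2*a; 0, 0, 1] := by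
  simp [x1, x2, Matrix.mul_fin_three]
  ring_nf
  simp

/-- Lusztig 4.3(i): for `a, b > 0`, the pair `(a', b') = (b, a)` is the unique pair of
positive reals with `x₁(a)x₂(b)x₂(b)x₁(a) = x₂(a')x₁(b')x₁(b')x₂(a')`. -/
theorem transition_A2_untwisted (a b : ℝ) (ha : 0 < a) (hb : 0 < b) :
    x1 a * x2 b * x2 b * x1 a = x2 b * x1 a * x1 a * x2 b ∧
    ∀ a' b' : ℝ, 0 < a' → 0 < b' →
      x1 a * x2 b * x2 b * x1 a = x2 a' * x1 b' * x1 b' * x2 a' →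
      a' = b ∧ b' = a := by
  constructor
  · rw [prod_eq, prod_eq']; ring_nf
  · intro a' b' _ _ h
    rw [prod_eq, prod_eq'] at h
    have h01 := congrArg (fun M => M 0 1) h
    have h12 := congrArg (fun M => M 1 2) h
    simp at h01 h12
    constructor <;> linarith
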